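/- Let P₁, P₂, τ₁, τ₂ > 0 satisfy τ₂·γ(P₁) ≤ τ₁·(γ(P₁+P₂) − γ(P₁)) (Case I), and set w₂ = γ(P₁)/γ(P₁+P₂), A = (γ(P₁+P₂) − γ(P₂), γ(P₂)), B = (γ(P₁), γ(P₁+P₂) − γ(P₁)). Let D₂(r₁, r₂) = w·τ₁/γ(P₁) + τ₂·(γ(P₁) − w·r₁)/(γ(P₁)·r₂). Then for every (r₁, r₂) ∈ C₁ with r₂ > 0 and τ₁·r₂ ≥ τ₂·r₁: if w ∈ [0, w₂] then D₂(A) ≤ D₂(r₁, r₂), and if w ∈ [w₂, 1] then D₂(B) ≤ D₂(r₁, r₂). -/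

import Mathlib

/-- γ(x) = (1/2)·log₂(1+x). -/
noncomputable def gam (x : ℝ) : ℝ := (1/2) * Real.logb 2 (1 + x)

/-- The standard two-user Gaussian MAC capacity region. -/
def C1 (P₁ P₂ : ℝ) : Set (ℝ × ℝ) :=
  {r : ℝ × ℝ | 0 ≤ r.1 ∧ r.1 ≤ gam P₁ ∧ 0 ≤ r.2 ∧ r.2 ≤ gam P₂ ∧
    r.1 + r.2 ≤ gam (P₁ + P₂)}

/-- D₂(r₁, r₂) = w·τ₁/γ(P₁) + τ₂·(γ(P₁) − w·r₁)/(γ(P₁)·r₂). -/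
noncomputable def D2 (w τ₁ τ₂ P₁ r₁ r₂ : ℝ) : ℝ :=
  w * τ₁ / gam P₁ + τ₂ * (gam P₁ - w * r₁) / (gam P₁ * r₂)

lemma gam_pos {x : ℝ} (hx : 0 < x) : 0 < gam x := by
  have : 0 < Real.logb 2 (1 + x) := Real.logb_pos one_lt_two (by linarith)
  unfold gam; linarith

lemma gam_lt {x y : ℝ} (hx : 0 < x) (hxy : x < y) : gam x < gam y := by
  have : Real.logb 2 (1 + x) < Real.logb 2 (1 + y) :=
    Real.logb_lt_logb one_lt_two (by linarith) (by linarith)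
  unfold gam; linarith

theorem stmt_7 (P₁ P₂ τ₁ τ₂ w : ℝ) (hP₁ : 0 < P₁) (hP₂ : 0 < P₂)
    (hτ₁ : 0 < τ₁) (hτ₂ : 0 < τ₂)
    (hcase : τ₂ * gam P₁ ≤ τ₁ * (gam (P₁ + P₂) - gam P₁)) :
    ∀ r₁ r₂ : ℝ, (r₁, r₂) ∈ C1 P₁ P₂ → 0 < r₂ → τ₂ * r₁ ≤ τ₁ * r₂ →
      (w ∈ Set.Icc (0:ℝ) (gam P₁ / gam (P₁ + P₂)) →
        D2 w τ₁ τ₂ P₁ (gam (P₁ + P₂) - gam P₂) (gam P₂) ≤ D2 w τ₁ τ₂ P₁ r₁ r₂) ∧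
      (w ∈ Set.Icc (gam P₁ / gam (P₁ + P₂)) 1 →
        D2 w τ₁ τ₂ P₁ (gam P₁) (gam (P₁ + P₂) - gam P₁) ≤ D2 w τ₁ τ₂ P₁ r₁ r₂) := by
  intro r₁ r₂ hmem hr₂ _
  obtain ⟨h1, h2, h3, h4, h5⟩ := hmem
  simp only at h1 h2 h3 h4 h5
  have hγ1 : 0 < gam P₁ := gam_pos hP₁
  have hγ2 : 0 < gam P₂ := gam_pos hP₂
  have h112 : gam P₁ < gam (P₁ + P₂) := gam_lt hP₁ (by linarith)
  have h212 : gam P₂ < gam (P₁ + P₂) := gam_lt hP₂ (by linarith)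
  have hγ12 : 0 < gam (P₁ + P₂) := lt_trans hγ1 h112
  have rewr : ∀ x y : ℝ, 0 < y → τ₂ * x / (gam P₁ * y) = (τ₂ / gam P₁) * (x / y) := by
    intro x y hy
    field_simp
  have main : ∀ a₁ a₂ : ℝ, 0 < a₂ →
      (gam P₁ - w * a₁) / a₂ ≤ (gam P₁ - w * r₁) / r₂ →
      D2 w τ₁ τ₂ P₁ a₁ a₂ ≤ D2 w τ₁ τ₂ P₁ r₁ r₂ := by
    intro a₁ a₂ ha₂ hkey
    unfold D2
    apply add_le_add_right
    rw [rewr _ _ ha₂, rewr _ _ hr₂]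
    exact mul_le_mul_of_nonneg_left hkey (by positivity)
  constructor
  · rintro ⟨hw0, hw1⟩
    have hw1' : w * gam (P₁ + P₂) ≤ gam P₁ := by
      rw [le_div_iff₀ hγ12] at hw1; linarith
    apply main _ _ hγ2
    rw [div_le_div_iff₀ hγ2 hr₂]
    nlinarith [mul_nonneg (sub_nonneg.2 hw1') (sub_nonneg.2 h4),
      mul_nonneg hw0 (mul_nonneg hγ2.le (sub_nonneg.2 h5))]
  · rintro ⟨hw0, hw1⟩
    have hw0' : gam P₁ ≤ w * gam (P₁ + P₂) := by
      rw [div_le_iff₀ hγ12] at hw0; linarith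
    apply main _ _ (by linarith)
    rw [div_le_div_iff₀ (by linarith) hr₂]
    nlinarith [mul_nonneg (sub_nonneg.2 hw1) (mul_nonneg hγ1.le (sub_nonneg.2 h5)),
      mul_nonneg (sub_nonneg.2 hw0') (sub_nonneg.2 h2)]
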